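/- Let δ be a real number, let ρ̃ be the 3×3 complex matrix [[1/4, δ, 0],[δ, 1/2, δ],[0, δ, 1/4]], and let τ be a 3×3 real symmetric matrix satisfying τ₁₁ = τ₃₃ and τ₁₂ = τ₂₃. On ℂ³⊗ℂ³ (basis |ab⟩ with a,b ∈ {1,2,3}, first factor S, second factor C) let K₀ = Σ_{i=1}^{3} |ii⟩⟨ii| + Σ_{(i,j)∈{(1,2),(2,3),(1,3)}} |e⁺_{ij}⟩⟨e⁺_{ij}| where |e⁺_{ij}⟩ = (|ij⟩+|ji⟩)/√2, and set σ₀ = K₀ (ρ̃⊗τ) K₀ᴴ. Then the partial trace of σ₀ over the first factor S satisfies: (Tr_S σ₀)₁₁ = (1/2)τ₁₁ + (1/16)τ₂₂ + (δ/2)τ₁₂; (Tr_S σ₀)₂₂ = (1/4)τ₁₁ + (5/8)τ₂₂ + δτ₁₂; (Tr_S σ₀)₁₂ = (7/16)τ₁₂ + (3δ/4)τ₁₁ + (δ/2)τ₂₂ + (δ/4)τ₁₃; (Tr_S σ₀)₁₃ = (3/8)τ₁₃ + (δ/2)τ₁₂. -/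
import Mathlib


open Matrix Kronecker

/-- The basis state `|ab⟩` of `ℂ³ ⊗ ℂ³`. -/
def ket (a b : Fin 3) : Fin 3 × Fin 3 → ℂ := fun p => if p = (a, b) then 1 else 0

/-- The symmetric maximally entangled state `|e⁺_{ij}⟩ = (|ij⟩ + |ji⟩)/√2`. -/
noncomputable def eplus (i j : Fin 3) : Fin 3 × Fin 3 → ℂ :=
  fun p => (ket i j p + ket j i p) / Real.sqrt 2

/-- The projection `K₀` onto the span of `|ii⟩` and `|e⁺_{ij}⟩`. -/
noncomputable def Kproj : Matrix (Fin 3 × Fin 3) (Fin 3 × Fin 3) ℂ :=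
  (∑ i : Fin 3, Matrix.vecMulVec (ket i i) (star (ket i i)))
    + Matrix.vecMulVec (eplus 0 1) (star (eplus 0 1))
    + Matrix.vecMulVec (eplus 1 2) (star (eplus 1 2))
    + Matrix.vecMulVec (eplus 0 2) (star (eplus 0 2))

noncomputable def rhoTilde (δ : ℝ) : Matrix (Fin 3) (Fin 3) ℂ :=
  !![1 / 4, δ, 0; δ, 1 / 2, δ; 0, δ, 1 / 4]

/-- Partial trace over the first tensor factor (system `S`). -/
noncomputable def ptrFirst (M : Matrix (Fin 3 × Fin 3) (Fin 3 × Fin 3) ℂ) :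
    Matrix (Fin 3) (Fin 3) ℂ :=
  Matrix.of fun a b => ∑ c : Fin 3, M (c, a) (c, b)

def d (p q : Fin 3 × Fin 3) : ℂ := if p = q then 1 else 0

lemma Kproj_apply (p q : Fin 3 × Fin 3) : Kproj p q =
    d p (0,0) * d q (0,0) + d p (1,1) * d q (1,1) + d p (2,2) * d q (2,2)
    + (d p (0,1) + d p (1,0)) * (d q (0,1) + d q (1,0)) / 2
    + (d p (1,2) + d p (2,1)) * (d q (1,2) + d q (2,1)) / 2
    + (d p (0,2) + d p (2,0)) * (d q (0,2) + d q (2,0)) / 2 := by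
  have hinv : ((((Real.sqrt 2 : ℝ) : ℂ))⁻¹)^2 = 1/2 := by
    rw [sq, ← mul_inv, ← Complex.ofReal_mul, Real.mul_self_sqrt (by norm_num)]
    norm_num
  simp only [Kproj, Matrix.add_apply, Matrix.sum_apply, Matrix.vecMulVec_apply,
    Pi.star_apply, eplus, ket, Fin.sum_univ_three, star_div₀, star_add,
    apply_ite (star : ℂ → ℂ), star_one, star_zero, Complex.star_def,
    Complex.conj_ofReal, d]
  ring_nf
  simp only [hinv]
  ring

lemma Krow00 (q : Fin 3 × Fin 3) : Kproj ((0:Fin 3),(0:Fin 3)) q = d q (0,0) := by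
  rw [Kproj_apply]; simp [d, Prod.ext_iff]
lemma Krow11 (q : Fin 3 × Fin 3) : Kproj ((1:Fin 3),(1:Fin 3)) q = d q (1,1) := by
  rw [Kproj_apply]; simp [d, Prod.ext_iff]
lemma Krow22 (q : Fin 3 × Fin 3) : Kproj ((2:Fin 3),(2:Fin 3)) q = d q (2,2) := by
  rw [Kproj_apply]; simp [d, Prod.ext_iff]
lemma Krow01 (q : Fin 3 × Fin 3) : Kproj ((0:Fin 3),(1:Fin 3)) q = (d q (0,1) + d q (1,0))/2 := by
  rw [Kproj_apply]; simp [d, Prod.ext_iff]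
lemma Krow10 (q : Fin 3 × Fin 3) : Kproj ((1:Fin 3),(0:Fin 3)) q = (d q (0,1) + d q (1,0))/2 := by
  rw [Kproj_apply]; simp [d, Prod.ext_iff]
lemma Krow12 (q : Fin 3 × Fin 3) : Kproj ((1:Fin 3),(2:Fin 3)) q = (d q (1,2) + d q (2,1))/2 := by
  rw [Kproj_apply]; simp [d, Prod.ext_iff]
lemma Krow21 (q : Fin 3 × Fin 3) : Kproj ((2:Fin 3),(1:Fin 3)) q = (d q (1,2) + d q (2,1))/2 := by
  rw [Kproj_apply]; simp [d, Prod.ext_iff]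
lemma Krow02 (q : Fin 3 × Fin 3) : Kproj ((0:Fin 3),(2:Fin 3)) q = (d q (0,2) + d q (2,0))/2 := by
  rw [Kproj_apply]; simp [d, Prod.ext_iff]
lemma Krow20 (q : Fin 3 × Fin 3) : Kproj ((2:Fin 3),(0:Fin 3)) q = (d q (0,2) + d q (2,0))/2 := by
  rw [Kproj_apply]; simp [d, Prod.ext_iff]

set_option maxHeartbeats 3000000 in
theorem three_level_catalyst_marginal_entries (δ : ℝ) (τ : Matrix (Fin 3) (Fin 3) ℝ)
    (hsymm : τ.IsSymm) (h11 : τ 0 0 = τ 2 2) (h12 : τ 0 1 = τ 1 2) :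
    ptrFirst (Kproj * (rhoTilde δ ⊗ₖ τ.map Complex.ofReal) * Kprojᴴ) 0 0
        = (1 / 2 : ℂ) * τ 0 0 + (1 / 16 : ℂ) * τ 1 1 + (δ / 2 : ℂ) * τ 0 1 ∧
    ptrFirst (Kproj * (rhoTilde δ ⊗ₖ τ.map Complex.ofReal) * Kprojᴴ) 1 1
        = (1 / 4 : ℂ) * τ 0 0 + (5 / 8 : ℂ) * τ 1 1 + (δ : ℂ) * τ 0 1 ∧
    ptrFirst (Kproj * (rhoTilde δ ⊗ₖ τ.map Complex.ofReal) * Kprojᴴ) 0 1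
        = (7 / 16 : ℂ) * τ 0 1 + (3 * δ / 4 : ℂ) * τ 0 0 + (δ / 2 : ℂ) * τ 1 1
            + (δ / 4 : ℂ) * τ 0 2 ∧
    ptrFirst (Kproj * (rhoTilde δ ⊗ₖ τ.map Complex.ofReal) * Kprojᴴ) 0 2
        = (3 / 8 : ℂ) * τ 0 2 + (δ / 2 : ℂ) * τ 0 1 := by
  have e10 : τ 1 0 = τ 0 1 := hsymm.apply 0 1
  have e20 : τ 2 0 = τ 0 2 := hsymm.apply 0 2
  have e21 : τ 2 1 = τ 1 2 := hsymm.apply 1 2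
  refine ⟨?_, ?_, ?_, ?_⟩ <;>
  · simp only [ptrFirst, Matrix.of_apply, Matrix.mul_apply, Matrix.conjTranspose_apply,
      Fintype.sum_prod_type, Fin.sum_univ_three, Krow00, Krow01, Krow02, Krow10, Krow11,
      Krow12, Krow20, Krow21, Krow22, d, kroneckerMap_apply,
      Matrix.map_apply, rhoTilde, Prod.mk.injEq]
    norm_num [Matrix.cons_val_zero, Matrix.cons_val_one, Matrix.head_cons, Matrix.head_fin_const,
      Matrix.cons_val_two, Matrix.tail_cons, Complex.conj_ofReal, e10, e20, e21, h11, h12]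
    simp (config := { decide := true }) only [if_true, if_false]
    ring
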